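/- Let γ ∈ (0,1) and suppose the per-step costs satisfy c(m, m̂, a) ≤ K_c·‖m − m̂‖_∞ (Lipschitz cost with zero cost at zero error) and the no-collection error satisfies the recursion of Theorem 7 with bound B := γK_c·δ/((1−γ)(1−γK_p)). If the cost of collecting data satisfies ℓ > B at every step, then the strategy of never collecting data achieves total discounted cost at most B, while any strategy that collects at least once incurs total cost strictly greater than B before accounting for estimation costs after the first collection; hence never collecting is optimal. -/

import Mathlib

/-- Corollary 3 (certainty threshold), simplified deterministic-bound form.
With the error recursion of Theorem 7 (error `e`, per-step estimation cost
`c t ≤ Kc * e t`), the never-collect strategy has total discounted cost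
`J0 = ∑_{t=1}^∞ γ^{t-1} c_t ≤ B := γ Kc δ/((1-γ)(1-γKp))`; any strategy that
collects at least once pays at least the collection cost `ℓ`, so if `ℓ > B`,
never collecting is (strictly) better. -/
theorem stmt_18 (γ Kc Kp δ ℓ : ℝ) (hγ0 : 0 < γ) (hγ1 : γ < 1)
    (hKc : 0 ≤ Kc) (hKp : 0 ≤ Kp) (hγKp : γ * Kp < 1) (hδ : 0 ≤ δ)
    (hℓ : γ * Kc * δ / ((1 - γ) * (1 - γ * Kp)) < ℓ)
    (e : ℕ → ℝ) (he0 : ∀ t, 0 ≤ e t) (he1 : e 1 = 0)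
    (hrec : ∀ t ≥ 1, e (t + 1) ≤ Kp * e t + δ)
    (c : ℕ → ℝ) (hc : ∀ t ≥ 1, 0 ≤ c t ∧ c t ≤ Kc * e t)
    (J1 : ℝ) (hJ1 : ℓ ≤ J1) :
    (∑' t : ℕ, γ ^ t * c (t + 1)) ≤ γ * Kc * δ / ((1 - γ) * (1 - γ * Kp)) ∧
    (∑' t : ℕ, γ ^ t * c (t + 1)) < J1 := by
  have hγ' : 0 < 1 - γ := by linarith
  have hq' : 0 < 1 - γ * Kp := by linarith
  -- Step 1: e (t+1) ≤ δ * ∑_{i<t} Kp^i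
  have hA : ∀ t : ℕ, e (t + 1) ≤ δ * ∑ i ∈ Finset.range t, Kp ^ i := by
    intro t
    induction t with
    | zero => simp [he1]
    | succ n ih =>
      have h1 : e (n + 1 + 1) ≤ Kp * e (n + 1) + δ := hrec (n + 1) (by omega)
      have h2 : Kp * e (n + 1) ≤ Kp * (δ * ∑ i ∈ Finset.range n, Kp ^ i) :=
        mul_le_mul_of_nonneg_left ih hKp
      calc e (n + 1 + 1) ≤ Kp * (δ * ∑ i ∈ Finset.range n, Kp ^ i) + δ := by linarith
        _ = δ * ∑ i ∈ Finset.range (n + 1), Kp ^ i := by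
            rw [geom_sum_succ]; ring
  -- nonnegativity of the summand
  have hnn : ∀ t : ℕ, 0 ≤ γ ^ t * c (t + 1) := fun t =>
    mul_nonneg (pow_nonneg hγ0.le t) (hc (t + 1) (by omega)).1
  -- geometric partial sum bound
  have hgeom : ∀ n : ℕ, (∑ k ∈ Finset.range n, γ ^ k) ≤ (1 - γ)⁻¹ := by
    intro n
    have hsum : Summable fun k : ℕ => γ ^ k :=
      summable_geometric_of_lt_one hγ0.le hγ1
    have := hsum.sum_le_tsum (Finset.range n) (fun i _ => pow_nonneg hγ0.le i)
    rwa [tsum_geometric_of_lt_one hγ0.le hγ1] at this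
  -- Step 2: partial sums bounded by B
  have hpartial : ∀ N : ℕ, (∑ t ∈ Finset.range N, γ ^ t * c (t + 1)) ≤
      γ * Kc * δ / ((1 - γ) * (1 - γ * Kp)) := by
    intro N
    have step1 : (∑ t ∈ Finset.range N, γ ^ t * c (t + 1)) ≤
        ∑ t ∈ Finset.range N, ∑ i ∈ Finset.range t, Kc * δ * (γ ^ t * Kp ^ i) := by
      apply Finset.sum_le_sum
      intro t _
      have h1 : c (t + 1) ≤ Kc * (δ * ∑ i ∈ Finset.range t, Kp ^ i) :=
        le_trans (hc (t + 1) (by omega)).2 (mul_le_mul_of_nonneg_left (hA t) hKc)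
      calc γ ^ t * c (t + 1) ≤ γ ^ t * (Kc * (δ * ∑ i ∈ Finset.range t, Kp ^ i)) :=
            mul_le_mul_of_nonneg_left h1 (pow_nonneg hγ0.le t)
        _ = ∑ i ∈ Finset.range t, Kc * δ * (γ ^ t * Kp ^ i) := by
            simp only [Finset.mul_sum]
            exact Finset.sum_congr rfl fun i _ => by ring
    have swap : (∑ t ∈ Finset.range N, ∑ i ∈ Finset.range t, Kc * δ * (γ ^ t * Kp ^ i)) =
        ∑ i ∈ Finset.range N, ∑ t ∈ Finset.Ico (i + 1) N, Kc * δ * (γ ^ t * Kp ^ i) := by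
      simp_rw [Finset.range_eq_Ico]; rw [← Finset.sum_Ico_Ico_comm']
    have step2 : (∑ i ∈ Finset.range N, ∑ t ∈ Finset.Ico (i + 1) N, Kc * δ * (γ ^ t * Kp ^ i)) ≤
        ∑ i ∈ Finset.range N, Kc * δ * γ * (1 - γ)⁻¹ * (γ * Kp) ^ i := by
      apply Finset.sum_le_sum
      intro i _
      have hIco : (∑ t ∈ Finset.Ico (i + 1) N, γ ^ t) ≤ γ ^ (i + 1) * (1 - γ)⁻¹ := by
        rw [Finset.sum_Ico_eq_sum_range]
        calc (∑ k ∈ Finset.range (N - (i + 1)), γ ^ (i + 1 + k))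
            = γ ^ (i + 1) * ∑ k ∈ Finset.range (N - (i + 1)), γ ^ k := by
              rw [Finset.mul_sum]
              exact Finset.sum_congr rfl fun k _ => by rw [pow_add]
          _ ≤ γ ^ (i + 1) * (1 - γ)⁻¹ :=
              mul_le_mul_of_nonneg_left (hgeom _) (pow_nonneg hγ0.le _)
      calc (∑ t ∈ Finset.Ico (i + 1) N, Kc * δ * (γ ^ t * Kp ^ i))
          = Kc * δ * Kp ^ i * ∑ t ∈ Finset.Ico (i + 1) N, γ ^ t := by
            rw [Finset.mul_sum]
            exact Finset.sum_congr rfl fun t _ => by ring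
        _ ≤ Kc * δ * Kp ^ i * (γ ^ (i + 1) * (1 - γ)⁻¹) := by
            apply mul_le_mul_of_nonneg_left hIco
            positivity
        _ = Kc * δ * γ * (1 - γ)⁻¹ * (γ * Kp) ^ i := by
            rw [mul_pow, pow_succ]; ring
    have step3 : (∑ i ∈ Finset.range N, Kc * δ * γ * (1 - γ)⁻¹ * (γ * Kp) ^ i) ≤
        γ * Kc * δ / ((1 - γ) * (1 - γ * Kp)) := by
      rw [← Finset.mul_sum]
      have hq0 : 0 ≤ γ * Kp := mul_nonneg hγ0.le hKp
      have hgeom2 : (∑ i ∈ Finset.range N, (γ * Kp) ^ i) ≤ (1 - γ * Kp)⁻¹ := by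
        have hsum : Summable fun k : ℕ => (γ * Kp) ^ k :=
          summable_geometric_of_lt_one hq0 hγKp
        have := hsum.sum_le_tsum (Finset.range N) (fun i _ => pow_nonneg hq0 i)
        rwa [tsum_geometric_of_lt_one hq0 hγKp] at this
      calc Kc * δ * γ * (1 - γ)⁻¹ * ∑ i ∈ Finset.range N, (γ * Kp) ^ i
          ≤ Kc * δ * γ * (1 - γ)⁻¹ * (1 - γ * Kp)⁻¹ := by
            apply mul_le_mul_of_nonneg_left hgeom2
            positivity
        _ = γ * Kc * δ / ((1 - γ) * (1 - γ * Kp)) := by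
            rw [div_eq_mul_inv, mul_inv]; ring
    calc (∑ t ∈ Finset.range N, γ ^ t * c (t + 1))
        ≤ ∑ t ∈ Finset.range N, ∑ i ∈ Finset.range t, Kc * δ * (γ ^ t * Kp ^ i) := step1
      _ = ∑ i ∈ Finset.range N, ∑ t ∈ Finset.Ico (i + 1) N, Kc * δ * (γ ^ t * Kp ^ i) := swap
      _ ≤ ∑ i ∈ Finset.range N, Kc * δ * γ * (1 - γ)⁻¹ * (γ * Kp) ^ i := step2
      _ ≤ γ * Kc * δ / ((1 - γ) * (1 - γ * Kp)) := step3
  have hle : (∑' t : ℕ, γ ^ t * c (t + 1)) ≤ γ * Kc * δ / ((1 - γ) * (1 - γ * Kp)) :=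
    Real.tsum_le_of_sum_range_le hnn hpartial
  exact ⟨hle, lt_of_le_of_lt hle (lt_of_lt_of_le hℓ hJ1)⟩
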